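/- Let z ∈ ℂ and let g : ℤ → ℂ be a nowhere-vanishing function satisfying g_{m+1}·g_{m−1}·(g_m² + 1) = g_m² + z for all m ∈ ℤ. Define H_m := g_m·g_{m−1} + g_m/g_{m−1} + g_{m−1}/g_m + z/(g_m·g_{m−1}). Then H_{m+1} = H_m for all m ∈ ℤ; that is, H is an integral of motion of the recurrence. -/

import Mathlib

/-- The Hamiltonian `H_m = g_m·g_{m−1} + g_m/g_{m−1} + g_{m−1}/g_m + z/(g_m·g_{m−1})` is an
integral of motion of the recurrence `g_{m+1}·g_{m−1}·(g_m² + 1) = g_m² + z`. -/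
theorem Y20_hamiltonian_conserved (z : ℂ) (g : ℤ → ℂ) (hg : ∀ m : ℤ, g m ≠ 0)
    (hrec : ∀ m : ℤ, g (m + 1) * g (m - 1) * ((g m) ^ 2 + 1) = (g m) ^ 2 + z)
    (H : ℤ → ℂ)
    (hH : ∀ m : ℤ, H m = g m * g (m - 1) + g m / g (m - 1) + g (m - 1) / g m +
      z / (g m * g (m - 1))) :
    ∀ m : ℤ, H (m + 1) = H m := by
  intro m
  have h := hrec m
  have ha := hg (m - 1)
  have hb := hg m
  have hc := hg (m + 1)
  rw [hH, hH]
  have h1 : (m + 1 - 1 : ℤ) = m := by ring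
  rw [h1]
  field_simp
  linear_combination (g (m + 1) - g (m - 1)) * h
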